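/- Suppose G_{α₀} is μ-strongly convex for some α₀ > 0 and μ > 0, each f_k is L-smooth, and C₁ > 0 satisfies ‖∇F(𝐱_*^β + s(𝐱_*^α − 𝐱_*^β))‖ ≤ C₁ for all s ∈ [0,1], α, β ∈ (0, α₀]. Let {α(t)} be a non-increasing positive stepsize sequence with α(0) ≤ min{(1+λ_m(W))/L, α₀}, let 𝐱(t+1) = 𝐱(t) − ∇G_{α(t)}(𝐱(t)), and suppose aₙ > 0 and t₀ ∈ ℕ are such that α(t) ≥ aₙ for all t ≤ t₀. Then ‖𝐱(t₀+1) − 𝐱_*^{α(t₀+1)}‖ ≤ ‖𝐱(0) − 𝐱_*^{α(0)}‖ + (2α₀C₁/(μ aₙ)) (α(0) − α(t₀+1)). -/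

import Mathlib

open Finset Set
open scoped RealInnerProductSpace

noncomputable section

/-- The quadratic penalty `(1/2) 𝐱ᵀ (I − W ⊗ I_n) 𝐱` on the stacked space `ℝ^{nm}`,
where `𝐱 = (x_1, …, x_m)` is indexed by pairs `(k, i)`. -/
def stackedQuad (m n : ℕ) (W : Matrix (Fin m) (Fin m) ℝ)
    (x : EuclideanSpace ℝ (Fin m × Fin n)) : ℝ :=
  (1 / 2) * (‖x‖ ^ 2 - ∑ k : Fin m, ∑ j : Fin m, W k j * ∑ i : Fin n, x (k, i) * x (j, i))

/-- `F(𝐱) = (1/m) ∑ₖ f_k(x_k)` on the stacked space `ℝ^{nm}`. -/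
def stackedF (m n : ℕ) (f : Fin m → EuclideanSpace ℝ (Fin n) → ℝ)
    (x : EuclideanSpace ℝ (Fin m × Fin n)) : ℝ :=
  (1 / (m : ℝ)) * ∑ k : Fin m, f k (WithLp.toLp 2 (fun i => x (k, i)))

/-- `G_α(𝐱) = α F(𝐱) + (1/2) 𝐱ᵀ (I − W ⊗ I_n) 𝐱`. -/
def DGDG (m n : ℕ) (W : Matrix (Fin m) (Fin m) ℝ)
    (f : Fin m → EuclideanSpace ℝ (Fin n) → ℝ) (α : ℝ)
    (x : EuclideanSpace ℝ (Fin m × Fin n)) : ℝ :=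
  α * stackedF m n f x + stackedQuad m n W x

/-- `g` is `μ`-strongly convex: `g − (μ/2)‖·‖²` is convex. -/
def StrongConvexWith {E : Type*} [NormedAddCommGroup E] [InnerProductSpace ℝ E]
    (μ : ℝ) (g : E → ℝ) : Prop :=
  ConvexOn ℝ Set.univ (fun x => g x - μ / 2 * ‖x‖ ^ 2)

section Aux
variable {E : Type*} [NormedAddCommGroup E] [InnerProductSpace ℝ E] [CompleteSpace E]

lemma le_of_sq_le_sq' {a b : ℝ} (ha : 0 ≤ a) (hb : 0 ≤ b) (h : a ^ 2 ≤ b ^ 2) : a ≤ b := by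
  nlinarith

lemma myHasGrad' {g : E → ℝ} {D : E →L[ℝ] ℝ} {b : E} {x : E}
    (h : HasFDerivAt g D x) (hb : ∀ v, D v = ⟪b, v⟫) : HasGradientAt g b x := by
  rw [hasGradientAt_iff_hasFDerivAt]
  have e : InnerProductSpace.toDual ℝ E b = D := by
    ext v
    simp [InnerProductSpace.toDual_apply_apply, hb v]
  rw [e]
  exact h

lemma hasGradientAt_normSq' (c : ℝ) (x : E) :
    HasGradientAt (fun z : E => c * ‖z‖ ^ 2) ((2 * c) • x) x := by
  have h1 : HasFDerivAt (fun z : E => (⟪z, z⟫ : ℝ))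
      ((fderivInnerCLM ℝ (x, x)).comp ((ContinuousLinearMap.id ℝ E).prod
        (ContinuousLinearMap.id ℝ E))) x :=
    (hasFDerivAt_id x).inner ℝ (hasFDerivAt_id x)
  have h2 : HasFDerivAt (fun z : E => c * ‖z‖ ^ 2)
      (c • ((fderivInnerCLM ℝ (x, x)).comp ((ContinuousLinearMap.id ℝ E).prod
        (ContinuousLinearMap.id ℝ E)))) x := by
    have := h1.const_mul c
    simpa only [real_inner_self_eq_norm_sq] using this
  refine myHasGrad' h2 fun v => ?_
  simp [real_inner_smul_left, real_inner_comm x v]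
  ring

lemma hasDerivAt_line' {g : E → ℝ} {G : E → E} (hg : ∀ z, HasGradientAt g (G z) z)
    (x v : E) (t : ℝ) :
    HasDerivAt (fun s : ℝ => g (x + s • v)) ⟪G (x + t • v), v⟫ t := by
  have hc : HasDerivAt (fun s : ℝ => x + s • v) v t := by
    simpa using ((hasDerivAt_id t).smul_const v).const_add x
  have := (hg (x + t • v)).hasFDerivAt.comp_hasDerivAt t hc
  simp only [InnerProductSpace.toDual_apply_apply] at this
  exact this


lemma convex_first_order {g : E → ℝ} {G : E → E} (hg : ∀ z, HasGradientAt g (G z) z)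
    (hconv : ConvexOn ℝ Set.univ g) (x y : E) : g x + ⟪G x, y - x⟫ ≤ g y := by
  set v := y - x with hv
  have hφd : ∀ t : ℝ, HasDerivAt (fun s : ℝ => g (x + s • v)) ⟪G (x + t • v), v⟫ t :=
    hasDerivAt_line' hg x v
  have hφconv : ConvexOn ℝ Set.univ (fun s : ℝ => g (x + s • v)) := by
    have := hconv.comp_affineMap (AffineMap.lineMap x y)
    simp only [Set.preimage_univ] at this
    refine this.congr fun t _ => ?_
    simp [AffineMap.lineMap_apply, hv]
    rw [add_comm]
  have h := hφconv.deriv_le_slope (mem_univ (0:ℝ)) (mem_univ (1:ℝ)) zero_lt_one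
    (hφd 0).differentiableAt
  rw [(hφd 0).deriv, slope_def_field] at h
  simp only [zero_smul, add_zero, one_smul, sub_zero, div_one] at h
  have hxy : x + v = y := by rw [hv]; abel
  rw [hxy] at h
  linarith

lemma descent_lemma {g : E → ℝ} {G : E → E} {ℓ : ℝ} (hg : ∀ z, HasGradientAt g (G z) z)
    (hℓ : 0 ≤ ℓ) (hlip : ∀ u v, ‖G u - G v‖ ≤ ℓ * ‖u - v‖) (x y : E) :
    g y ≤ g x + ⟪G x, y - x⟫ + ℓ / 2 * ‖y - x‖ ^ 2 := by
  set v := y - x with hv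
  have hGcont : Continuous G := by
    have : LipschitzWith (Real.toNNReal ℓ) G := by
      apply LipschitzWith.of_dist_le_mul
      intro a b
      rw [dist_eq_norm, dist_eq_norm, Real.coe_toNNReal _ hℓ]
      exact hlip a b
    exact this.continuous
  have hφd : ∀ t : ℝ, HasDerivAt (fun s : ℝ => g (x + s • v)) ⟪G (x + t • v), v⟫ t :=
    hasDerivAt_line' hg x v
  have hcont : Continuous (fun t : ℝ => (⟪G (x + t • v), v⟫ : ℝ)) := by
    apply Continuous.inner
    · exact hGcont.comp (by continuity)
    · exact continuous_const
  have hint : (∫ t in (0:ℝ)..1, (⟪G (x + t • v), v⟫ : ℝ)) = g (x + (1:ℝ) • v) - g (x + (0:ℝ) • v) :=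
    intervalIntegral.integral_eq_sub_of_hasDerivAt (f := fun s : ℝ => g (x + s • v))
      (fun t _ => hφd t) (hcont.intervalIntegrable 0 1)
  have hbound : ∀ t ∈ Set.Icc (0:ℝ) 1,
      (⟪G (x + t • v), v⟫ : ℝ) ≤ ⟪G x, v⟫ + ℓ * ‖v‖ ^ 2 * t := by
    intro t ht
    have h1 : (⟪G (x + t • v), v⟫ : ℝ) - ⟪G x, v⟫ = ⟪G (x + t • v) - G x, v⟫ := by
      rw [inner_sub_left]
    have h2 : (⟪G (x + t • v) - G x, v⟫ : ℝ) ≤ ‖G (x + t • v) - G x‖ * ‖v‖ :=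
      real_inner_le_norm _ _
    have h3 : ‖G (x + t • v) - G x‖ ≤ ℓ * (t * ‖v‖) := by
      have := hlip (x + t • v) x
      simpa [norm_smul, abs_of_nonneg ht.1] using this
    nlinarith [norm_nonneg v, ht.1]
  have hmono : (∫ t in (0:ℝ)..1, (⟪G (x + t • v), v⟫ : ℝ))
      ≤ ∫ t in (0:ℝ)..1, (⟪G x, v⟫ + ℓ * ‖v‖ ^ 2 * t) := by
    apply intervalIntegral.integral_mono_on zero_le_one
      (hcont.intervalIntegrable 0 1)
      ((continuous_const.add (continuous_const.mul continuous_id)).intervalIntegrable 0 1)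
    exact hbound
  have hrhs : (∫ t in (0:ℝ)..1, (⟪G x, v⟫ + ℓ * ‖v‖ ^ 2 * t)) = ⟪G x, v⟫ + ℓ * ‖v‖ ^ 2 / 2 := by
    have hci : IntervalIntegrable (fun t : ℝ => ℓ * ‖v‖ ^ 2 * t) MeasureTheory.volume 0 1 :=
      (continuous_const.mul continuous_id).intervalIntegrable 0 1
    rw [intervalIntegral.integral_add intervalIntegrable_const hci,
      intervalIntegral.integral_const_mul, integral_id, intervalIntegral.integral_const]
    norm_num
    ring
  have : g y - g x ≤ ⟪G x, v⟫ + ℓ * ‖v‖ ^ 2 / 2 := by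
    have := hmono.trans_eq hrhs
    rw [hint] at this
    simpa [hv] using this
  simp only [hv] at *
  linarith


lemma baillon_haddad {g : E → ℝ} {G : E → E} {ℓ : ℝ} (hg : ∀ z, HasGradientAt g (G z) z)
    (hℓ : 0 < ℓ)
    (hlip : ∀ u v, ‖G u - G v‖ ≤ ℓ * ‖u - v‖)
    (hfo : ∀ x y : E, g x + ⟪G x, y - x⟫ ≤ g y) (x y : E) :
    (1 / ℓ) * ‖G x - G y‖ ^ 2 ≤ ⟪G x - G y, x - y⟫ := by
  have key : ∀ a b : E, g a + ⟪G a, b - a⟫ + 1 / (2 * ℓ) * ‖G b - G a‖ ^ 2 ≤ g b := by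
    intro a b
    set z := b - (1 / ℓ) • (G b - G a) with hz
    have hd := descent_lemma hg hℓ.le hlip b z
    have hfo2 := hfo a z
    have hz1 : z - b = -((1 / ℓ) • (G b - G a)) := by rw [hz]; abel
    have hz2 : z - a = (b - a) - (1 / ℓ) • (G b - G a) := by rw [hz]; abel
    have e1 : (⟪G b, z - b⟫ : ℝ) = -(1 / ℓ) * ⟪G b, G b - G a⟫ := by
      rw [hz1, inner_neg_right, real_inner_smul_right]; ring
    have e2 : ‖z - b‖ ^ 2 = (1 / ℓ) ^ 2 * ‖G b - G a‖ ^ 2 := by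
      rw [hz1, norm_neg, norm_smul, Real.norm_eq_abs, abs_of_pos (by positivity : (0:ℝ) < 1/ℓ),
        mul_pow]
    have e3 : (⟪G a, z - a⟫ : ℝ) = ⟪G a, b - a⟫ - (1 / ℓ) * ⟪G a, G b - G a⟫ := by
      rw [hz2, inner_sub_right, real_inner_smul_right]
    have e4 : (⟪G b, G b - G a⟫ : ℝ) - ⟪G a, G b - G a⟫ = ‖G b - G a‖ ^ 2 := by
      rw [← inner_sub_left, real_inner_self_eq_norm_sq]
    rw [e1, e2] at hd
    rw [e3] at hfo2
    have hℓne : ℓ ≠ 0 := ne_of_gt hℓ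
    have hq1 : ℓ / 2 * ((1 / ℓ) ^ 2 * ‖G b - G a‖ ^ 2) = 1 / (2 * ℓ) * ‖G b - G a‖ ^ 2 := by
      field_simp
    have hq2 : (1 / ℓ) * (⟪G b, G b - G a⟫ : ℝ) - (1 / ℓ) * (⟪G a, G b - G a⟫ : ℝ)
        = (1 / ℓ) * ‖G b - G a‖ ^ 2 := by rw [← mul_sub, e4]
    have hq3 : (1 / ℓ) * ‖G b - G a‖ ^ 2 = 2 * (1 / (2 * ℓ) * ‖G b - G a‖ ^ 2) := by
      field_simp
    have hS : 0 ≤ 1 / (2 * ℓ) * ‖G b - G a‖ ^ 2 := by positivity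
    linarith [hd, hfo2]
  have k1 := key x y
  have k2 := key y x
  have e5 : (⟪G x, y - x⟫ : ℝ) + ⟪G y, x - y⟫ = -⟪G x - G y, x - y⟫ := by
    rw [inner_sub_left]
    have : (⟪G y, x - y⟫ : ℝ) = -⟪G y, y - x⟫ := by
      rw [← inner_neg_right]; congr 1; abel
    rw [this]
    have : (⟪G x, y - x⟫ : ℝ) = -⟪G x, x - y⟫ := by
      rw [← inner_neg_right]; congr 1; abel
    rw [this]
    ring
  have e6 : ‖G y - G x‖ = ‖G x - G y‖ := by rw [← norm_neg]; congr 1; abel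
  rw [e6] at k1
  have heq : 1 / ℓ * ‖G x - G y‖ ^ 2
      = 1 / (2 * ℓ) * ‖G x - G y‖ ^ 2 + 1 / (2 * ℓ) * ‖G x - G y‖ ^ 2 := by
    field_simp; ring
  linarith [k1, k2, e5]

lemma strong_mono {g : E → ℝ} {G : E → E} {μ : ℝ}
    (hg : ∀ z, HasGradientAt g (G z) z) (hsc : StrongConvexWith μ g) (x y : E) :
    μ * ‖x - y‖ ^ 2 ≤ ⟪G x - G y, x - y⟫ := by
  set h : E → ℝ := fun z => g z - μ / 2 * ‖z‖ ^ 2 with hh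
  set H : E → E := fun z => G z - μ • z with hH
  have hgradh : ∀ z, HasGradientAt h (H z) z := by
    intro z
    have h1 : HasFDerivAt g (InnerProductSpace.toDual ℝ E (G z)) z := (hg z).hasFDerivAt
    have h2 : HasFDerivAt (fun w : E => μ / 2 * ‖w‖ ^ 2)
        (InnerProductSpace.toDual ℝ E ((2 * (μ / 2)) • z)) z :=
      (hasGradientAt_normSq' (μ / 2) z).hasFDerivAt
    refine myHasGrad' (h1.sub h2) fun v => ?_
    simp only [ContinuousLinearMap.coe_sub', Pi.sub_apply, InnerProductSpace.toDual_apply_apply,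
      hH, inner_sub_left, real_inner_smul_left]
    ring
  have hfo := convex_first_order hgradh hsc
  have k1 := hfo x y
  have k2 := hfo y x
  have e1 : (⟪H x, y - x⟫ : ℝ) = ⟪G x, y - x⟫ - μ * ⟪x, y - x⟫ := by
    simp [hH, inner_sub_left, real_inner_smul_left]
  have e2 : (⟪H y, x - y⟫ : ℝ) = ⟪G y, x - y⟫ - μ * ⟪y, x - y⟫ := by
    simp [hH, inner_sub_left, real_inner_smul_left]
  have e3 : (⟪G y, x - y⟫ : ℝ) = -⟪G y, y - x⟫ := by
    rw [← inner_neg_right]; congr 1; abel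
  have e4 : (⟪G x, y - x⟫ : ℝ) - ⟪G y, y - x⟫ = -⟪G x - G y, x - y⟫ := by
    rw [inner_sub_left]
    have : (⟪G x, y - x⟫ : ℝ) = -⟪G x, x - y⟫ := by
      rw [← inner_neg_right]; congr 1; abel
    have h2 : (⟪G y, y - x⟫ : ℝ) = -⟪G y, x - y⟫ := by
      rw [← inner_neg_right]; congr 1; abel
    rw [this, h2]; ring
  have e5 : (⟪x, y - x⟫ : ℝ) + ⟪y, x - y⟫ = -‖x - y‖ ^ 2 := by
    have : (⟪x, y - x⟫ : ℝ) + ⟪y, x - y⟫ = -⟪x - y, x - y⟫ := by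
      rw [inner_sub_left]
      have h1 : (⟪x, y - x⟫ : ℝ) = -⟪x, x - y⟫ := by
        rw [← inner_neg_right]; congr 1; abel
      rw [h1]; ring
    rw [this, real_inner_self_eq_norm_sq]
  have hsum : h x + h y + (⟪H x, y - x⟫ : ℝ) + ⟪H y, x - y⟫ ≤ h y + h x := by linarith
  rw [e1, e2, e3] at hsum
  have e5' : μ * (⟪x, y - x⟫ : ℝ) + μ * (⟪y, x - y⟫ : ℝ) = -(μ * ‖x - y‖ ^ 2) := by
    linear_combination μ * e5
  linarith [hsum, e4, e5']


lemma nonexpansive_step {g : E → ℝ} {G : E → E} {ℓ : ℝ}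
    (hg : ∀ z, HasGradientAt g (G z) z) (hconv : ConvexOn ℝ Set.univ g)
    (hℓ : 0 < ℓ) (hℓ2 : ℓ ≤ 2) (hlip : ∀ u v, ‖G u - G v‖ ≤ ℓ * ‖u - v‖)
    {x y : E} (hy : G y = 0) : ‖x - G x - y‖ ≤ ‖x - y‖ := by
  have hbh := baillon_haddad hg hℓ hlip (convex_first_order hg hconv) x y
  rw [hy, sub_zero] at hbh
  have hhalf : (1 / 2 : ℝ) * ‖G x‖ ^ 2 ≤ ⟪G x, x - y⟫ := by
    have : (1 / 2 : ℝ) ≤ 1 / ℓ := by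
      apply div_le_div_of_nonneg_left <;> linarith
    nlinarith [norm_nonneg (G x), hbh]
  have hexp : ‖x - G x - y‖ ^ 2 = ‖x - y‖ ^ 2 - 2 * ⟪G x, x - y⟫ + ‖G x‖ ^ 2 := by
    have : x - G x - y = (x - y) - G x := by abel
    rw [this, norm_sub_sq_real]
    rw [real_inner_comm]
  have hle : ‖x - G x - y‖ ^ 2 ≤ ‖x - y‖ ^ 2 := by nlinarith [hhalf, hexp]
  nlinarith [norm_nonneg (x - G x - y), norm_nonneg (x - y), hle]


lemma convexOn_smul_normSq {c : ℝ} (hc : 0 ≤ c) :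
    ConvexOn ℝ Set.univ (fun z : E => c * ‖z‖ ^ 2) := by
  refine ⟨convex_univ, fun x _ y _ a b ha hb hab => ?_⟩
  simp only [smul_eq_mul]
  have hn : ‖a • x + b • y‖ ^ 2 ≤ a * ‖x‖ ^ 2 + b * ‖y‖ ^ 2 := by
    have h1 : ‖a • x + b • y‖ ^ 2
        = a ^ 2 * ‖x‖ ^ 2 + 2 * (a * b) * ⟪x, y⟫ + b ^ 2 * ‖y‖ ^ 2 := by
      rw [norm_add_sq_real, norm_smul, norm_smul, real_inner_smul_left, real_inner_smul_right,
        Real.norm_eq_abs, Real.norm_eq_abs, abs_of_nonneg ha, abs_of_nonneg hb, mul_pow]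
      ring
    have h2 : (⟪x, y⟫ : ℝ) ≤ ‖x‖ * ‖y‖ := real_inner_le_norm x y
    have h3 : 2 * ‖x‖ * ‖y‖ ≤ ‖x‖ ^ 2 + ‖y‖ ^ 2 := by nlinarith [sq_nonneg (‖x‖ - ‖y‖)]
    nlinarith [mul_nonneg ha hb, sq_nonneg (a - b), norm_nonneg x, norm_nonneg y,
      mul_le_mul_of_nonneg_left h2 (by positivity : (0:ℝ) ≤ 2 * (a * b)),
      mul_le_mul_of_nonneg_left h3 (mul_nonneg ha hb),
      sq_nonneg ((a - b))]
  nlinarith [mul_le_mul_of_nonneg_left hn hc]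
end Aux

section MOp
variable {m n : ℕ} (W : Matrix (Fin m) (Fin m) ℝ)

/-- The linear map `W ⊗ I` on the stacked space. -/
def MopL : EuclideanSpace ℝ (Fin m × Fin n) →ₗ[ℝ] EuclideanSpace ℝ (Fin m × Fin n) where
  toFun x := WithLp.toLp 2 (fun p : Fin m × Fin n => ∑ j, W p.1 j * x (j, p.2))
  map_add' x y := by
    ext p
    simp [mul_add, Finset.sum_add_distrib]
  map_smul' c x := by
    ext p
    simp only [PiLp.smul_apply, smul_eq_mul, RingHom.id_apply, Finset.mul_sum]
    exact Finset.sum_congr rfl fun _ _ => by ring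

lemma MopL_apply (x : EuclideanSpace ℝ (Fin m × Fin n)) (p : Fin m × Fin n) :
    MopL W x p = ∑ j, W p.1 j * x (j, p.2) := rfl

lemma inner_MopL (x y : EuclideanSpace ℝ (Fin m × Fin n)) :
    ⟪MopL W x, y⟫ = ∑ k : Fin m, ∑ j : Fin m, W k j * ∑ i : Fin n, x (j, i) * y (k, i) := by
  simp only [PiLp.inner_apply, RCLike.inner_apply, conj_trivial, Fintype.sum_prod_type,
    MopL_apply, Finset.mul_sum]
  refine Finset.sum_congr rfl fun k _ => ?_
  rw [Finset.sum_comm]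
  refine Finset.sum_congr rfl fun j _ => ?_
  exact Finset.sum_congr rfl fun i _ => by ring

lemma quad_eq_inner (x : EuclideanSpace ℝ (Fin m × Fin n)) :
    stackedQuad m n W x = 1 / 2 * (‖x‖ ^ 2 - ⟪MopL W x, x⟫) := by
  have h : ∑ k : Fin m, ∑ j : Fin m, W k j * ∑ i : Fin n, x (k, i) * x (j, i)
      = ⟪MopL W x, x⟫ := by
    rw [inner_MopL]
    refine Finset.sum_congr rfl fun k _ => Finset.sum_congr rfl fun j _ => ?_
    congr 1
    exact Finset.sum_congr rfl fun i _ => by ring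
  unfold stackedQuad
  rw [h]

lemma inner_MopL_symm (hWsymm : W.IsSymm) (x y : EuclideanSpace ℝ (Fin m × Fin n)) :
    ⟪MopL W x, y⟫ = ⟪x, MopL W y⟫ := by
  calc (⟪MopL W x, y⟫ : ℝ)
      = ∑ k : Fin m, ∑ j : Fin m, W k j * ∑ i : Fin n, x (j, i) * y (k, i) := inner_MopL W x y
    _ = ∑ k : Fin m, ∑ j : Fin m, W k j * ∑ i : Fin n, y (j, i) * x (k, i) := by
        rw [Finset.sum_comm]
        refine Finset.sum_congr rfl fun k _ => Finset.sum_congr rfl fun j _ => ?_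
        rw [hWsymm.apply k j]
        congr 1
        exact Finset.sum_congr rfl fun i _ => by ring
    _ = ⟪MopL W y, x⟫ := (inner_MopL W y x).symm
    _ = ⟪x, MopL W y⟫ := real_inner_comm _ _

lemma norm_sq_eq_sum (x : EuclideanSpace ℝ (Fin m × Fin n)) :
    ‖x‖ ^ 2 = ∑ k : Fin m, ∑ i : Fin n, x (k, i) ^ 2 := by
  rw [← real_inner_self_eq_norm_sq, PiLp.inner_apply, Fintype.sum_prod_type]
  exact Finset.sum_congr rfl fun k _ => Finset.sum_congr rfl fun i _ => by
    simp [RCLike.inner_apply]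

lemma inner_MopL_le (hWsymm : W.IsSymm) (hWnonneg : ∀ i j, 0 ≤ W i j)
    (hWrow : ∀ i, ∑ j, W i j = 1) (x : EuclideanSpace ℝ (Fin m × Fin n)) :
    ⟪MopL W x, x⟫ ≤ ‖x‖ ^ 2 := by
  set A : Fin m → ℝ := fun k => ∑ i : Fin n, x (k, i) ^ 2 with hA
  have hcol : ∀ j, ∑ k, W k j = 1 := by
    intro j
    rw [← hWrow j]
    exact Finset.sum_congr rfl fun k _ => hWsymm.apply j k
  rw [inner_MopL]
  have step1 : ∑ k : Fin m, ∑ j : Fin m, W k j * ∑ i : Fin n, x (j, i) * x (k, i)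
      ≤ ∑ k : Fin m, ∑ j : Fin m, W k j * ((A j + A k) / 2) := by
    refine Finset.sum_le_sum fun k _ => Finset.sum_le_sum fun j _ => ?_
    refine mul_le_mul_of_nonneg_left ?_ (hWnonneg k j)
    calc ∑ i : Fin n, x (j, i) * x (k, i)
        ≤ ∑ i : Fin n, (x (j, i) ^ 2 + x (k, i) ^ 2) / 2 :=
          Finset.sum_le_sum fun i _ => by nlinarith [sq_nonneg (x (j, i) - x (k, i))]
      _ = (A j + A k) / 2 := by
          rw [← Finset.sum_div, Finset.sum_add_distrib]
  have step2 : ∑ k : Fin m, ∑ j : Fin m, W k j * ((A j + A k) / 2) = ∑ k, A k := by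
    have e1 : ∀ k, ∑ j : Fin m, W k j * ((A j + A k) / 2)
        = (∑ j, W k j * A j) / 2 + A k / 2 := by
      intro k
      have h0 : ∑ j : Fin m, W k j * ((A j + A k) / 2)
          = ∑ j : Fin m, (W k j * A j / 2 + W k j * (A k / 2)) :=
        Finset.sum_congr rfl fun j _ => by ring
      rw [h0, Finset.sum_add_distrib, ← Finset.sum_div, ← Finset.sum_mul, hWrow k, one_mul]
    have e2 : ∑ k : Fin m, ∑ j : Fin m, W k j * A j = ∑ j, A j := by
      rw [Finset.sum_comm]
      refine Finset.sum_congr rfl fun j _ => ?_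
      rw [← Finset.sum_mul, hcol j, one_mul]
    calc ∑ k : Fin m, ∑ j : Fin m, W k j * ((A j + A k) / 2)
        = ∑ k : Fin m, ((∑ j, W k j * A j) / 2 + A k / 2) :=
          Finset.sum_congr rfl fun k _ => e1 k
      _ = (∑ k : Fin m, ∑ j, W k j * A j) / 2 + (∑ k, A k) / 2 := by
          rw [Finset.sum_add_distrib, ← Finset.sum_div, ← Finset.sum_div]
      _ = ∑ k, A k := by rw [e2]; ring
  rw [norm_sq_eq_sum]
  exact step1.trans_eq step2

lemma sumform_eq (x : EuclideanSpace ℝ (Fin m × Fin n)) :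
    ∑ k : Fin m, ∑ j : Fin m, W k j * ∑ i : Fin n, x (k, i) * x (j, i) = ⟪MopL W x, x⟫ := by
  rw [inner_MopL]
  refine Finset.sum_congr rfl fun k _ => Finset.sum_congr rfl fun j _ => ?_
  congr 1
  exact Finset.sum_congr rfl fun i _ => by ring

/-- value of the quadratic form of `I - W ⊗ I`. -/
def qv (x : EuclideanSpace ℝ (Fin m × Fin n)) : ℝ := ‖x‖ ^ 2 - ⟪MopL W x, x⟫

variable {W}
variable (hWsymm : W.IsSymm) (hWnonneg : ∀ i j, 0 ≤ W i j) (hWrow : ∀ i, ∑ j, W i j = 1)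

lemma quad_eq_qv (x : EuclideanSpace ℝ (Fin m × Fin n)) :
    stackedQuad m n W x = 1 / 2 * qv W x := quad_eq_inner W x

include hWsymm hWnonneg hWrow in
lemma qv_nonneg (x : EuclideanSpace ℝ (Fin m × Fin n)) : 0 ≤ qv W x :=
  sub_nonneg.2 (inner_MopL_le W hWsymm hWnonneg hWrow x)

include hWsymm in
lemma qv_sub (u v : EuclideanSpace ℝ (Fin m × Fin n)) :
    qv W (u - v) = qv W u + qv W v - 2 * ⟪u - MopL W u, v⟫ := by
  have hms : MopL W (u - v) = MopL W u - MopL W v := map_sub _ _ _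
  have h1 : (⟪MopL W (u - v), u - v⟫ : ℝ)
      = ⟪MopL W u, u⟫ - 2 * ⟪MopL W u, v⟫ + ⟪MopL W v, v⟫ := by
    rw [hms, inner_sub_left, inner_sub_right, inner_sub_right]
    have : (⟪MopL W v, u⟫ : ℝ) = ⟪MopL W u, v⟫ := by
      rw [inner_MopL_symm W hWsymm v u, real_inner_comm]
    rw [this]; ring
  have h2 : ‖u - v‖ ^ 2 = ‖u‖ ^ 2 - 2 * ⟪u, v⟫ + ‖v‖ ^ 2 := by
    rw [norm_sub_sq_real]
  simp only [qv, h1, h2, inner_sub_left]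
  ring

include hWsymm hWnonneg hWrow in
lemma two_inner_le (u v : EuclideanSpace ℝ (Fin m × Fin n)) :
    2 * ⟪u - MopL W u, v⟫ ≤ qv W u + qv W v := by
  have := qv_nonneg hWsymm hWnonneg hWrow (u - v)
  rw [qv_sub hWsymm u v] at this
  linarith

lemma qv_smul (t : ℝ) (u : EuclideanSpace ℝ (Fin m × Fin n)) :
    qv W (t • u) = t ^ 2 * qv W u := by
  simp only [qv, map_smul, real_inner_smul_left, real_inner_smul_right, norm_smul]
  rw [Real.norm_eq_abs, mul_pow, sq_abs]
  ring

variable {lam : ℝ}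
  (hlam : ∀ u : EuclideanSpace ℝ (Fin m × Fin n),
    lam * ‖u‖ ^ 2 ≤ ∑ k : Fin m, ∑ j : Fin m, W k j * ∑ i : Fin n, u (k, i) * u (j, i))

include hlam in
lemma qv_le (x : EuclideanSpace ℝ (Fin m × Fin n)) : qv W x ≤ (1 - lam) * ‖x‖ ^ 2 := by
  have := hlam x
  rw [sumform_eq W x] at this
  simp only [qv]
  nlinarith

include hWsymm hWnonneg hWrow hlam in
lemma lam_le_one (hm : 1 ≤ m) (hn : 1 ≤ n) : lam ≤ 1 := by
  set e : EuclideanSpace ℝ (Fin m × Fin n) :=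
    EuclideanSpace.single (⟨0, by omega⟩, ⟨0, by omega⟩) (1 : ℝ) with he
  have h1 : ‖e‖ ^ 2 = 1 := by
    rw [he, EuclideanSpace.norm_single]; norm_num
  have h2 := (hlam e)
  rw [sumform_eq W e] at h2
  have h3 := inner_MopL_le W hWsymm hWnonneg hWrow e
  rw [h1] at h2 h3
  nlinarith

include hWsymm hWnonneg hWrow hlam in
lemma normA_le (hm : 1 ≤ m) (hn : 1 ≤ n) (u : EuclideanSpace ℝ (Fin m × Fin n)) :
    ‖u - MopL W u‖ ≤ (1 - lam) * ‖u‖ := by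
  set s := ‖u - MopL W u‖ ^ 2 with hs
  have hb : ∀ v, 2 * (⟪u - MopL W u, v⟫ : ℝ) ≤ qv W u + qv W v :=
    fun v => two_inner_le hWsymm hWnonneg hWrow u v
  have hinner : ∀ t : ℝ, (⟪u - MopL W u, t • (u - MopL W u)⟫ : ℝ) = t * s := by
    intro t
    rw [real_inner_smul_right, real_inner_self_eq_norm_sq]
  -- lam ≤ 1
  have hlam1 : lam ≤ 1 := lam_le_one hWsymm hWnonneg hWrow hlam hm hn
  rcases lt_or_eq_of_le hlam1 with hlt | heq
  · set c := 1 - lam with hc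
    have hcpos : 0 < c := by simp only [hc]; linarith
    have key := hb ((1 / c) • (u - MopL W u))
    rw [hinner (1 / c), qv_smul] at key
    have hqA : qv W (u - MopL W u) ≤ c * s := qv_le hlam _
    have hqu : qv W u ≤ c * ‖u‖ ^ 2 := qv_le hlam u
    have key2 : 2 * (1 / c * s) ≤ qv W u + (1 / c) ^ 2 * (c * s) :=
      key.trans (add_le_add_right (mul_le_mul_of_nonneg_left hqA (sq_nonneg _)) _)
    have hc2 : (1 / c) ^ 2 * (c * s) = (1 / c) * s := by field_simp
    rw [hc2] at key2
    have h5 : (1 / c) * s ≤ qv W u := by linarith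
    have h5' : s ≤ c * qv W u := by
      have h7 := mul_le_mul_of_nonneg_left h5 hcpos.le
      calc s = c * (1 / c * s) := by field_simp
        _ ≤ c * qv W u := h7
    have hs_le : s ≤ (c * ‖u‖) ^ 2 := by nlinarith [h5', hqu, hcpos]
    have h6 : 0 ≤ c * ‖u‖ := mul_nonneg hcpos.le (norm_nonneg u)
    have h8 : ‖u - MopL W u‖ ^ 2 ≤ (c * ‖u‖) ^ 2 := hs_le
    calc ‖u - MopL W u‖ ≤ c * ‖u‖ := by nlinarith [norm_nonneg (u - MopL W u), h6, h8]
      _ = (1 - lam) * ‖u‖ := by rw [hc]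
  · -- lam = 1 : the form is zero and A = 0
    have hq0 : ∀ v : EuclideanSpace ℝ (Fin m × Fin n), qv W v = 0 := by
      intro v
      have h1 := qv_le hlam v
      have h2 := qv_nonneg hWsymm hWnonneg hWrow v
      rw [← heq] at h1
      simp at h1
      linarith
    have key := hb (u - MopL W u)
    rw [hq0, hq0] at key
    have : (⟪u - MopL W u, u - MopL W u⟫ : ℝ) = s := by
      rw [real_inner_self_eq_norm_sq]
    rw [this] at key
    have hAzero : s ≤ 0 := by linarith
    have : ‖u - MopL W u‖ = 0 := by nlinarith [norm_nonneg (u - MopL W u)]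
    rw [this, ← heq]
    simp [norm_nonneg]

include hWsymm hWnonneg hWrow in
lemma convexOn_stackedQuad : ConvexOn ℝ Set.univ (stackedQuad m n W) := by
  refine ⟨convex_univ, fun x _ y _ a b ha hb hab => ?_⟩
  simp only [smul_eq_mul, quad_eq_qv]
  have hexp : qv W (a • x + b • y)
      = a ^ 2 * qv W x + b ^ 2 * qv W y + 2 * (a * b) * (⟪x - MopL W x, y⟫ : ℝ) := by
    have h1 : a • x + b • y = a • x - (-b) • y := by
      rw [neg_smul]; abel
    have h2 : (⟪a • x - MopL W (a • x), (-b) • y⟫ : ℝ)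
        = -(a * b) * ⟪x - MopL W x, y⟫ := by
      rw [map_smul, ← smul_sub, real_inner_smul_left, real_inner_smul_right]
      ring
    rw [h1, qv_sub hWsymm, qv_smul, qv_smul, h2]
    ring
  have htwo := two_inner_le hWsymm hWnonneg hWrow x y
  have h3 : 2 * (a * b) * (⟪x - MopL W x, y⟫ : ℝ) ≤ a * b * qv W x + a * b * qv W y := by
    nlinarith [mul_le_mul_of_nonneg_left htwo (mul_nonneg ha hb)]
  have e1 : a ^ 2 * qv W x + a * b * qv W x = a * qv W x := by
    linear_combination (a * qv W x) * hab
  have e2 : b ^ 2 * qv W y + a * b * qv W y = b * qv W y := by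
    linear_combination (b * qv W y) * hab
  rw [hexp]
  linarith [h3, e1, e2]

include hWsymm in
lemma hasGradientAt_stackedQuad (x : EuclideanSpace ℝ (Fin m × Fin n)) :
    HasGradientAt (stackedQuad m n W) (x - MopL W x) x := by
  set Mc : EuclideanSpace ℝ (Fin m × Fin n) →L[ℝ] EuclideanSpace ℝ (Fin m × Fin n) :=
    LinearMap.toContinuousLinearMap (MopL W) with hMc
  have hMcapp : ∀ z, Mc z = MopL W z := fun z => rfl
  have h1 := (hasGradientAt_normSq' (1/2 : ℝ) x).hasFDerivAt
  have h2 : HasFDerivAt (fun z : EuclideanSpace ℝ (Fin m × Fin n) => (⟪Mc z, z⟫ : ℝ))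
      ((fderivInnerCLM ℝ (Mc x, x)).comp (Mc.prod (ContinuousLinearMap.id ℝ _))) x :=
    (Mc.hasFDerivAt).inner ℝ (hasFDerivAt_id x)
  have h3 := h2.const_mul (1/2 : ℝ)
  have h4 := h1.sub h3
  have hfun : stackedQuad m n W
      = fun z => (1/2 : ℝ) * ‖z‖ ^ 2 - (1/2 : ℝ) * ⟪Mc z, z⟫ := by
    funext z
    rw [quad_eq_inner, hMcapp]
    ring
  rw [hfun]
  refine myHasGrad' h4 fun v => ?_
  simp only [ContinuousLinearMap.coe_sub', Pi.sub_apply, ContinuousLinearMap.coe_smul',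
    Pi.smul_apply, smul_eq_mul, InnerProductSpace.toDual_apply_apply,
    ContinuousLinearMap.coe_comp', Function.comp_apply, fderivInnerCLM_apply,
    ContinuousLinearMap.prod_apply, ContinuousLinearMap.coe_id', id_eq]
  have hsym : (⟪Mc v, x⟫ : ℝ) = ⟪Mc x, v⟫ := by
    rw [hMcapp, hMcapp, inner_MopL_symm W hWsymm v x, real_inner_comm]
  rw [hsym]
  rw [inner_sub_left, real_inner_smul_left, hMcapp]
  ring

end MOp

lemma euclid_norm_sq {ι : Type*} [Fintype ι] (x : EuclideanSpace ℝ ι) :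
    ‖x‖ ^ 2 = ∑ i, x i ^ 2 := by
  rw [← real_inner_self_eq_norm_sq, PiLp.inner_apply]
  exact Finset.sum_congr rfl fun i _ => by simp [RCLike.inner_apply]


section FF
variable {m n : ℕ} {f : Fin m → EuclideanSpace ℝ (Fin n) → ℝ}

def projL (m n : ℕ) (k : Fin m) :
    EuclideanSpace ℝ (Fin m × Fin n) →ₗ[ℝ] EuclideanSpace ℝ (Fin n) where
  toFun x := WithLp.toLp 2 (fun i => x (k, i))
  map_add' x y := rfl
  map_smul' c x := rfl

/-- The gradient of `stackedF`. -/
def gF (m n : ℕ) (f : Fin m → EuclideanSpace ℝ (Fin n) → ℝ)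
    (x : EuclideanSpace ℝ (Fin m × Fin n)) : EuclideanSpace ℝ (Fin m × Fin n) :=
  WithLp.toLp 2 (fun p : Fin m × Fin n => (1 / (m : ℝ)) * gradient (f p.1) (WithLp.toLp 2 (fun i => x (p.1, i))) p.2)

lemma hasGradientAt_stackedF (hdiff : ∀ k, Differentiable ℝ (f k))
    (x : EuclideanSpace ℝ (Fin m × Fin n)) :
    HasGradientAt (stackedF m n f) (gF m n f x) x := by
  set pc : (k : Fin m) → (EuclideanSpace ℝ (Fin m × Fin n) →L[ℝ] EuclideanSpace ℝ (Fin n)) :=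
    fun k => LinearMap.toContinuousLinearMap (projL m n k) with hpc
  have hpcapp : ∀ k z i, pc k z i = z (k, i) := fun k z i => rfl
  have hgrad : ∀ k, HasGradientAt (f k) (gradient (f k) (pc k x)) (pc k x) :=
    fun k => ((hdiff k) (pc k x)).hasGradientAt
  have hcomp : ∀ k, HasFDerivAt (fun z : EuclideanSpace ℝ (Fin m × Fin n) => f k (pc k z))
      ((InnerProductSpace.toDual ℝ _ (gradient (f k) (pc k x))).comp (pc k)) x :=
    fun k => HasFDerivAt.comp x (hgrad k).hasFDerivAt (pc k).hasFDerivAt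
  have hsum := HasFDerivAt.fun_sum (fun k (_ : k ∈ Finset.univ) => hcomp k)
  have hfull := hsum.const_mul (1 / (m : ℝ))
  have hfun : stackedF m n f
      = fun z => (1 / (m : ℝ)) * ∑ k, f k (pc k z) := rfl
  rw [hfun]
  refine myHasGrad' hfull fun v => ?_
  have hlhs : ∀ k, ((InnerProductSpace.toDual ℝ _ (gradient (f k) (pc k x))).comp (pc k)) v
      = ∑ i, gradient (f k) (pc k x) i * v (k, i) := by
    intro k
    simp only [ContinuousLinearMap.coe_comp', Function.comp_apply,
      InnerProductSpace.toDual_apply_apply, PiLp.inner_apply, RCLike.inner_apply, conj_trivial]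
    exact Finset.sum_congr rfl fun i _ => by rw [hpcapp, mul_comm]
  simp only [ContinuousLinearMap.coe_smul', Pi.smul_apply, smul_eq_mul,
    ContinuousLinearMap.coe_sum', Finset.sum_apply]
  simp only [hlhs]
  rw [PiLp.inner_apply, Fintype.sum_prod_type]
  simp only [RCLike.inner_apply, conj_trivial, gF]
  rw [Finset.mul_sum]
  refine Finset.sum_congr rfl fun k _ => ?_
  rw [Finset.mul_sum]
  refine Finset.sum_congr rfl fun i _ => ?_
  rw [show (pc k) x = (WithLp.toLp 2 (fun i => x (k, i)) : EuclideanSpace ℝ (Fin n)) from rfl]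
  ring

lemma gF_lip {L : ℝ} (hL : 0 ≤ L) (hm : 1 ≤ m)
    (hsmooth : ∀ k, ∀ x y, ‖gradient (f k) x - gradient (f k) y‖ ≤ L * ‖x - y‖)
    (x y : EuclideanSpace ℝ (Fin m × Fin n)) :
    ‖gF m n f x - gF m n f y‖ ≤ L * ‖x - y‖ := by
  have hm' : (1 : ℝ) ≤ (m : ℝ) := by exact_mod_cast hm
  have hmpos : (0 : ℝ) < (m : ℝ) := by linarith
  set px : Fin m → EuclideanSpace ℝ (Fin n) := fun k => WithLp.toLp 2 (fun i => x (k, i)) with hpx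
  set py : Fin m → EuclideanSpace ℝ (Fin n) := fun k => WithLp.toLp 2 (fun i => y (k, i)) with hpy
  have key : ‖gF m n f x - gF m n f y‖ ^ 2 ≤ (L * ‖x - y‖) ^ 2 := by
    rw [euclid_norm_sq, Fintype.sum_prod_type]
    have hterm : ∀ k, ∑ i, (gF m n f x - gF m n f y) (k, i) ^ 2
        = (1 / (m : ℝ)) ^ 2 * ‖gradient (f k) (px k) - gradient (f k) (py k)‖ ^ 2 := by
      intro k
      rw [euclid_norm_sq, Finset.mul_sum]
      refine Finset.sum_congr rfl fun i _ => ?_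
      have h1 : (gF m n f x - gF m n f y) (k, i) = gF m n f x (k, i) - gF m n f y (k, i) := rfl
      have h2 : (gradient (f k) (px k) - gradient (f k) (py k)) i
          = gradient (f k) (px k) i - gradient (f k) (py k) i := rfl
      rw [h1, h2]
      simp only [gF, hpx, hpy]
      ring
    rw [Finset.sum_congr rfl fun k _ => hterm k, ← Finset.mul_sum]
    have hsq : ∀ k, ‖gradient (f k) (px k) - gradient (f k) (py k)‖ ^ 2
        ≤ L ^ 2 * ‖px k - py k‖ ^ 2 := by
      intro k
      have := hsmooth k (px k) (py k)
      nlinarith [norm_nonneg (gradient (f k) (px k) - gradient (f k) (py k)),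
        norm_nonneg (px k - py k)]
    have hsum2 : ∑ k, ‖gradient (f k) (px k) - gradient (f k) (py k)‖ ^ 2
        ≤ L ^ 2 * ∑ k, ‖px k - py k‖ ^ 2 := by
      rw [Finset.mul_sum]
      exact Finset.sum_le_sum fun k _ => hsq k
    have hxy : ∑ k, ‖px k - py k‖ ^ 2 = ‖x - y‖ ^ 2 := by
      rw [euclid_norm_sq, Fintype.sum_prod_type]
      refine Finset.sum_congr rfl fun k _ => ?_
      rw [euclid_norm_sq]
      exact Finset.sum_congr rfl fun i _ => rfl
    have hcoef : (1 / (m : ℝ)) ^ 2 ≤ 1 := by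
      rw [div_pow, one_pow]
      rw [div_le_one (by positivity)]
      nlinarith
    have hnn : 0 ≤ ∑ k, ‖gradient (f k) (px k) - gradient (f k) (py k)‖ ^ 2 :=
      Finset.sum_nonneg fun k _ => sq_nonneg _
    calc (1 / (m : ℝ)) ^ 2 * ∑ k, ‖gradient (f k) (px k) - gradient (f k) (py k)‖ ^ 2
        ≤ 1 * ∑ k, ‖gradient (f k) (px k) - gradient (f k) (py k)‖ ^ 2 :=
          mul_le_mul_of_nonneg_right hcoef hnn
      _ = ∑ k, ‖gradient (f k) (px k) - gradient (f k) (py k)‖ ^ 2 := one_mul _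
      _ ≤ L ^ 2 * ‖x - y‖ ^ 2 := by rw [← hxy]; exact hsum2
      _ = (L * ‖x - y‖) ^ 2 := by ring
  exact le_of_sq_le_sq' (norm_nonneg _) (by positivity) key
end FF

section Main
variable {m n : ℕ} {W : Matrix (Fin m) (Fin m) ℝ}
  {f : Fin m → EuclideanSpace ℝ (Fin n) → ℝ}

/-- gradient of `DGDG`. -/
def gradG (m n : ℕ) (W : Matrix (Fin m) (Fin m) ℝ)
    (f : Fin m → EuclideanSpace ℝ (Fin n) → ℝ) (a : ℝ)
    (x : EuclideanSpace ℝ (Fin m × Fin n)) : EuclideanSpace ℝ (Fin m × Fin n) :=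
  a • gF m n f x + (x - MopL W x)

lemma hasGradientAt_DGDG (hWsymm : W.IsSymm) (hdiff : ∀ k, Differentiable ℝ (f k))
    (a : ℝ) (x : EuclideanSpace ℝ (Fin m × Fin n)) :
    HasGradientAt (DGDG m n W f a) (gradG m n W f a x) x := by
  have h1 := (hasGradientAt_stackedF hdiff x).hasFDerivAt
  have h2 := (hasGradientAt_stackedQuad hWsymm x).hasFDerivAt
  have h3 := (h1.const_mul a).add h2
  exact myHasGrad' h3 fun v => by
    simp only [ContinuousLinearMap.coe_add', Pi.add_apply, ContinuousLinearMap.coe_smul',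
      Pi.smul_apply, smul_eq_mul, InnerProductSpace.toDual_apply_apply, gradG,
      inner_add_left, real_inner_smul_left]

lemma gradient_DGDG (hWsymm : W.IsSymm) (hdiff : ∀ k, Differentiable ℝ (f k))
    (a : ℝ) (x : EuclideanSpace ℝ (Fin m × Fin n)) :
    gradient (DGDG m n W f a) x = gradG m n W f a x :=
  (hasGradientAt_DGDG hWsymm hdiff a x).gradient

lemma gradG_diff (a b : ℝ) (x : EuclideanSpace ℝ (Fin m × Fin n)) :
    gradG m n W f a x - gradG m n W f b x = (a - b) • gF m n f x := by
  simp only [gradG, sub_smul]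
  abel

lemma gradG_lip {L lam a : ℝ} (hWsymm : W.IsSymm) (hWnonneg : ∀ i j, 0 ≤ W i j)
    (hWrow : ∀ i, ∑ j, W i j = 1)
    (hlam : ∀ u : EuclideanSpace ℝ (Fin m × Fin n),
      lam * ‖u‖ ^ 2 ≤ ∑ k : Fin m, ∑ j : Fin m, W k j * ∑ i : Fin n, u (k, i) * u (j, i))
    (hm : 1 ≤ m) (hn : 1 ≤ n) (hL : 0 ≤ L) (ha : 0 ≤ a)
    (hsmooth : ∀ k, ∀ x y, ‖gradient (f k) x - gradient (f k) y‖ ≤ L * ‖x - y‖)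
    (x y : EuclideanSpace ℝ (Fin m × Fin n)) :
    ‖gradG m n W f a x - gradG m n W f a y‖ ≤ (a * L + (1 - lam)) * ‖x - y‖ := by
  have he : gradG m n W f a x - gradG m n W f a y
      = a • (gF m n f x - gF m n f y) + ((x - y) - MopL W (x - y)) := by
    simp only [gradG, smul_sub, map_sub]
    abel
  rw [he]
  calc ‖a • (gF m n f x - gF m n f y) + ((x - y) - MopL W (x - y))‖
      ≤ ‖a • (gF m n f x - gF m n f y)‖ + ‖(x - y) - MopL W (x - y)‖ := norm_add_le _ _
    _ ≤ a * (L * ‖x - y‖) + (1 - lam) * ‖x - y‖ := by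
        refine add_le_add ?_ (normA_le hWsymm hWnonneg hWrow hlam hm hn (x - y))
        rw [norm_smul, Real.norm_eq_abs, abs_of_nonneg ha]
        exact mul_le_mul_of_nonneg_left (gF_lip hL hm hsmooth x y) ha
    _ = (a * L + (1 - lam)) * ‖x - y‖ := by ring

lemma DGDG_decompose {α₀ : ℝ} (hα₀ : 0 < α₀) (a : ℝ) (μ : ℝ) :
    (fun z : EuclideanSpace ℝ (Fin m × Fin n) => DGDG m n W f a z - (μ * a / α₀) / 2 * ‖z‖ ^ 2)
      = fun z => (a / α₀) * (DGDG m n W f α₀ z - μ / 2 * ‖z‖ ^ 2)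
          + (1 - a / α₀) * stackedQuad m n W z := by
  funext z
  simp only [DGDG]
  field_simp
  ring

lemma strongConvex_DGDG {μ α₀ a : ℝ} (hμ : 0 < μ) (hα₀ : 0 < α₀)
    (hGsc : StrongConvexWith μ (DGDG m n W f α₀))
    (hWsymm : W.IsSymm) (hWnonneg : ∀ i j, 0 ≤ W i j) (hWrow : ∀ i, ∑ j, W i j = 1)
    (ha : 0 ≤ a) (ha2 : a ≤ α₀) :
    StrongConvexWith (μ * a / α₀) (DGDG m n W f a) := by
  unfold StrongConvexWith
  rw [DGDG_decompose hα₀ a μ]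
  have h1 : (0:ℝ) ≤ a / α₀ := by positivity
  have h2 : (0:ℝ) ≤ 1 - a / α₀ := by
    rw [sub_nonneg, div_le_one hα₀]; exact ha2
  have hc1 := hGsc.smul h1
  have hc2 := (convexOn_stackedQuad (n := n) hWsymm hWnonneg hWrow).smul h2
  have := hc1.add hc2
  refine this.congr fun z _ => ?_
  simp only [Pi.add_apply, smul_eq_mul]

lemma convexOn_DGDG {μ α₀ a : ℝ} (hμ : 0 < μ) (hα₀ : 0 < α₀)
    (hGsc : StrongConvexWith μ (DGDG m n W f α₀))
    (hWsymm : W.IsSymm) (hWnonneg : ∀ i j, 0 ≤ W i j) (hWrow : ∀ i, ∑ j, W i j = 1)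
    (ha : 0 ≤ a) (ha2 : a ≤ α₀) :
    ConvexOn ℝ Set.univ (DGDG m n W f a) := by
  have hsc := strongConvex_DGDG hμ hα₀ hGsc hWsymm hWnonneg hWrow ha ha2
  have hnorm : ConvexOn ℝ Set.univ
      (fun z : EuclideanSpace ℝ (Fin m × Fin n) => (μ * a / α₀) / 2 * ‖z‖ ^ 2) :=
    convexOn_smul_normSq (by positivity)
  have := hsc.add hnorm
  refine this.congr fun z _ => ?_
  simp only [Pi.add_apply]
  ring

end Main

/-- Under strong convexity of `G_{α₀}`, `L`-smoothness of the local costs,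
non-increasing stepsizes with `α(0) ≤ min{(1+λ_m(W))/L, α₀}` and `α(t) ≥ aₙ` for `t ≤ t₀`,
the DGD iterates satisfy
`‖𝐱(t₀+1) − 𝐱_*^{α(t₀+1)}‖ ≤ ‖𝐱(0) − 𝐱_*^{α(0)}‖ + (2α₀C₁/(μaₙ))(α(0) − α(t₀+1))`. -/
theorem dgd_cumulative_tracking {m n : ℕ} (hm : 1 ≤ m) (hn : 1 ≤ n)
    (W : Matrix (Fin m) (Fin m) ℝ)
    (hWsymm : W.IsSymm)
    (hWnonneg : ∀ i j, 0 ≤ W i j)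
    (hWrow : ∀ i, ∑ j, W i j = 1)
    (hWdiag : ∀ i, 0 < W i i)
    (f : Fin m → EuclideanSpace ℝ (Fin n) → ℝ)
    (hdiff : ∀ k, Differentiable ℝ (f k))
    (L : ℝ) (hL : 0 < L)
    (hsmooth : ∀ k, ∀ x y, ‖gradient (f k) x - gradient (f k) y‖ ≤ L * ‖x - y‖)
    (lam : ℝ) (hlam_gt : -1 < lam)
    (hlam : ∀ u : EuclideanSpace ℝ (Fin m × Fin n),
      lam * ‖u‖ ^ 2 ≤ ∑ k : Fin m, ∑ j : Fin m, W k j * ∑ i : Fin n, u (k, i) * u (j, i))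
    (μ α₀ : ℝ) (hμ : 0 < μ) (hα₀ : 0 < α₀)
    (hGsc : StrongConvexWith μ (DGDG m n W f α₀))
    (xstar : ℝ → EuclideanSpace ℝ (Fin m × Fin n))
    (hmin : ∀ a ∈ Set.Ioc (0 : ℝ) α₀, ∀ y, DGDG m n W f a (xstar a) ≤ DGDG m n W f a y)
    (C₁ : ℝ) (hC₁pos : 0 < C₁)
    (hC₁ : ∀ s ∈ Set.Icc (0 : ℝ) 1, ∀ a ∈ Set.Ioc (0 : ℝ) α₀, ∀ b ∈ Set.Ioc (0 : ℝ) α₀,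
      ‖gradient (stackedF m n f) (xstar b + s • (xstar a - xstar b))‖ ≤ C₁)
    (α : ℕ → ℝ) (hαpos : ∀ t, 0 < α t) (hαmono : ∀ t, α (t + 1) ≤ α t)
    (hα0 : α 0 ≤ min ((1 + lam) / L) α₀)
    (x : ℕ → EuclideanSpace ℝ (Fin m × Fin n))
    (hiter : ∀ t, x (t + 1) = x t - gradient (DGDG m n W f (α t)) (x t))
    (aN : ℝ) (haN : 0 < aN) (t₀ : ℕ)
    (hstep : ∀ t ≤ t₀, aN ≤ α t) :
    ‖x (t₀ + 1) - xstar (α (t₀ + 1))‖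
      ≤ ‖x 0 - xstar (α 0)‖ + (2 * α₀ * C₁ / (μ * aN)) * (α 0 - α (t₀ + 1)) := by
  have hαle0 : ∀ t, α t ≤ α 0 := by
    intro t
    induction t with
    | zero => exact le_refl _
    | succ k ih => exact (hαmono k).trans ih
  have hα0α₀ : α 0 ≤ α₀ := le_trans hα0 (min_le_right _ _)
  have hα0L : α 0 ≤ (1 + lam) / L := le_trans hα0 (min_le_left _ _)
  have hmemIoc : ∀ t, α t ∈ Set.Ioc (0:ℝ) α₀ := fun t => ⟨hαpos t, (hαle0 t).trans hα0α₀⟩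
  have hlam1 : lam ≤ 1 := lam_le_one hWsymm hWnonneg hWrow hlam hm hn
  have hgradzero : ∀ a ∈ Set.Ioc (0:ℝ) α₀, gradG m n W f a (xstar a) = 0 := by
    intro a ha
    have hloc : IsLocalMin (DGDG m n W f a) (xstar a) :=
      Filter.Eventually.of_forall (fun y => hmin a ha y)
    have h1 := (hasGradientAt_DGDG hWsymm hdiff a (xstar a)).hasFDerivAt.fderiv
    rw [hloc.fderiv_eq_zero] at h1
    exact (LinearIsometryEquiv.map_eq_zero_iff _).mp h1.symm
  have hgFbound : ∀ b ∈ Set.Ioc (0:ℝ) α₀, ‖gF m n f (xstar b)‖ ≤ C₁ := by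
    intro b hb
    have := hC₁ 0 (by norm_num) b hb b hb
    rw [zero_smul, add_zero] at this
    rwa [(hasGradientAt_stackedF hdiff (xstar b)).gradient] at this
  have htrack : ∀ a ∈ Set.Ioc (0:ℝ) α₀, ∀ b ∈ Set.Ioc (0:ℝ) α₀, b ≤ a →
      ‖xstar a - xstar b‖ ≤ (α₀ * C₁ / (μ * a)) * (a - b) := by
    intro a ha b hb hba
    set u := xstar a with hu
    set v := xstar b with hv
    have hsc := strongConvex_DGDG hμ hα₀ hGsc hWsymm hWnonneg hWrow ha.1.le ha.2
    have hmono := strong_mono (hasGradientAt_DGDG hWsymm hdiff a) hsc u v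
    have hGu : gradG m n W f a u = 0 := hgradzero a ha
    have hGv : gradG m n W f a v = (a - b) • gF m n f v := by
      have h1 := gradG_diff (W := W) (f := f) a b v
      rw [hgradzero b hb, sub_zero] at h1
      exact h1
    rw [hGu, hGv, zero_sub] at hmono
    have hCb := hgFbound b hb
    have hin : (⟪-((a - b) • gF m n f v), u - v⟫ : ℝ) ≤ (a - b) * C₁ * ‖u - v‖ := by
      calc (⟪-((a - b) • gF m n f v), u - v⟫ : ℝ)
          ≤ ‖-((a - b) • gF m n f v)‖ * ‖u - v‖ := real_inner_le_norm _ _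
        _ = (a - b) * ‖gF m n f v‖ * ‖u - v‖ := by
            rw [norm_neg, norm_smul, Real.norm_eq_abs, abs_of_nonneg (by linarith)]
        _ ≤ (a - b) * C₁ * ‖u - v‖ := by
            refine mul_le_mul_of_nonneg_right ?_ (norm_nonneg _)
            exact mul_le_mul_of_nonneg_left hCb (by linarith)
    rcases eq_or_lt_of_le (norm_nonneg (u - v)) with h0 | hpos
    · rw [← h0]
      exact mul_nonneg (le_of_lt (div_pos (mul_pos hα₀ hC₁pos) (mul_pos hμ ha.1))) (by linarith)
    · have h2 : μ * a / α₀ * ‖u - v‖ ≤ (a - b) * C₁ := by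
        nlinarith [hmono.trans hin, hpos]
      have hone : (α₀ / (μ * a)) * (μ * a / α₀) = 1 := by
        have ha0 : a ≠ 0 := ne_of_gt ha.1
        have hμ0 : μ ≠ 0 := ne_of_gt hμ
        have hα₀0 : α₀ ≠ 0 := ne_of_gt hα₀
        field_simp
      have h3 := mul_le_mul_of_nonneg_left h2
        (le_of_lt (div_pos hα₀ (mul_pos hμ ha.1)))
      calc ‖u - v‖ = ((α₀ / (μ * a)) * (μ * a / α₀)) * ‖u - v‖ := by rw [hone, one_mul]
        _ = (α₀ / (μ * a)) * (μ * a / α₀ * ‖u - v‖) := by ring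
        _ ≤ (α₀ / (μ * a)) * ((a - b) * C₁) := h3
        _ = α₀ * C₁ / (μ * a) * (a - b) := by ring
  set c := 2 * α₀ * C₁ / (μ * aN) with hc
  have hcnn : 0 ≤ c := by positivity
  have hstep1 : ∀ t, aN ≤ α t →
      ‖x (t + 1) - xstar (α (t + 1))‖
        ≤ ‖x t - xstar (α t)‖ + c * (α t - α (t + 1)) := by
    intro t haNt
    have hat := hmemIoc t
    have hat1 := hmemIoc (t + 1)
    set a := α t with haa
    have haL : a * L ≤ 1 + lam := by
      have h := (hαle0 t).trans hα0L
      rw [le_div_iff₀ hL] at h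
      linarith
    have hℓpos : 0 < a * L + (1 - lam) := by
      have := mul_pos hat.1 hL
      linarith
    have hℓ2 : a * L + (1 - lam) ≤ 2 := by linarith
    have hconv := convexOn_DGDG hμ hα₀ hGsc hWsymm hWnonneg hWrow hat.1.le hat.2
    have hlip : ∀ u v, ‖gradG m n W f a u - gradG m n W f a v‖
        ≤ (a * L + (1 - lam)) * ‖u - v‖ :=
      fun u v => gradG_lip hWsymm hWnonneg hWrow hlam hm hn hL.le hat.1.le hsmooth u v
    have hcontr : ‖x t - gradG m n W f a (x t) - xstar a‖ ≤ ‖x t - xstar a‖ :=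
      nonexpansive_step (hasGradientAt_DGDG hWsymm hdiff a) hconv hℓpos hℓ2 hlip
        (hgradzero a hat)
    have hxt1 : x (t + 1) = x t - gradG m n W f a (x t) := by
      rw [hiter t, gradient_DGDG hWsymm hdiff]
    have htr := htrack a hat (α (t + 1)) hat1 (hαmono t)
    have hcc : α₀ * C₁ / (μ * a) * (a - α (t + 1)) ≤ c * (a - α (t + 1)) := by
      refine mul_le_mul_of_nonneg_right ?_ (by linarith [hαmono t])
      rw [hc, div_le_div_iff₀ (mul_pos hμ hat.1) (mul_pos hμ haN)]
      nlinarith [mul_le_mul_of_nonneg_left haNt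
        (by positivity : (0:ℝ) ≤ μ * (α₀ * C₁)), mul_pos (mul_pos hμ haN) (mul_pos hα₀ hC₁pos)]
    have htri : ‖x (t + 1) - xstar (α (t + 1))‖
        ≤ ‖x (t + 1) - xstar a‖ + ‖xstar a - xstar (α (t + 1))‖ := by
      rw [show x (t + 1) - xstar (α (t + 1))
        = (x (t + 1) - xstar a) + (xstar a - xstar (α (t + 1))) from by abel]
      exact norm_add_le _ _
    calc ‖x (t + 1) - xstar (α (t + 1))‖
        ≤ ‖x (t + 1) - xstar a‖ + ‖xstar a - xstar (α (t + 1))‖ := htri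
      _ ≤ ‖x t - xstar a‖ + c * (a - α (t + 1)) := by
          rw [hxt1]
          exact add_le_add hcontr (htr.trans hcc)
  have hmain : ∀ T, (∀ t ≤ T, aN ≤ α t) →
      ‖x (T + 1) - xstar (α (T + 1))‖
        ≤ ‖x 0 - xstar (α 0)‖ + c * (α 0 - α (T + 1)) := by
    intro T
    induction T with
    | zero =>
      intro hT
      exact hstep1 0 (hT 0 le_rfl)
    | succ k ih =>
      intro hT
      have h1 := ih (fun t ht => hT t (ht.trans (Nat.le_succ k)))
      have h2 := hstep1 (k + 1) (hT (k + 1) le_rfl)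
      calc ‖x (k + 1 + 1) - xstar (α (k + 1 + 1))‖
          ≤ ‖x (k + 1) - xstar (α (k + 1))‖ + c * (α (k + 1) - α (k + 1 + 1)) := h2
        _ ≤ ‖x 0 - xstar (α 0)‖ + c * (α 0 - α (k + 1)) + c * (α (k + 1) - α (k + 1 + 1)) := by
            linarith
        _ = ‖x 0 - xstar (α 0)‖ + c * (α 0 - α (k + 1 + 1)) := by ring
  exact hmain t₀ hstep
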